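/- arXiv:1307.2672 — 3 statements merged into one kernel-verified Lean document; each statement's English description precedes it below -/
import Mathlib

section
/- Consider k circles in the plane with centers p₁,…,p_k and radii r₁,…,r_k forming a d-ply system (every point of the plane lies in at most d of the closed disks). Suppose the intersection graph of these disks is 9d-inductive, i.e., there is an ordering of the disks such that each disk intersects at most 9d disks later in the ordering. Then the number of subsets S of the disks such that all disks in S have a common point is at most k · d · C(9d, d−1). -/
open Metric Finset

private lemma choose_mono_right {n a : ℕ} : ∀ b, 2 * b ≤ n → a ≤ b → n.choose a ≤ n.choose b := by
  intro b
  induction b with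
  | zero => intro _ ha; simp [Nat.le_zero.mp ha]
  | succ b ih =>
    intro hb hab
    rcases Nat.eq_or_lt_of_le hab with h | h
    · subst h; exact le_rfl
    · have hab' : a ≤ b := Nat.lt_succ_iff.mp h
      have h2b : 2 * b ≤ n := by omega
      refine (ih h2b hab').trans ?_
      have hhalf : b + 1 ≤ n / 2 := (Nat.le_div_iff_mul_le (by norm_num)).mpr (by omega)
      exact Nat.choose_le_succ_of_lt_half_left (by omega)

/-- Consider `k` closed disks in the plane forming a `d`-ply system (every point lies in
at most `d` of the disks), whose intersection graph is `9d`-inductive (witnessed by an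
injective numbering `f` such that each disk intersects at most `9d` disks with larger
numbers). Then the number of nonempty subsets of disks with a common point is at most
`k * d * C(9d, d-1)`. -/
theorem count_intersecting_sets_dply (k d : ℕ)
    (p : Fin k → EuclideanSpace ℝ (Fin 2)) (r : Fin k → ℝ)
    (hply : ∀ x : EuclideanSpace ℝ (Fin 2),
      {i : Fin k | x ∈ closedBall (p i) (r i)}.ncard ≤ d)
    (f : Fin k → ℕ) (hf : Function.Injective f)
    (hind : ∀ i : Fin k,
      {j : Fin k | f i < f j ∧ (closedBall (p i) (r i) ∩ closedBall (p j) (r j)).Nonempty}.ncard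
        ≤ 9 * d) :
    {S : Finset (Fin k) | S.Nonempty ∧ (⋂ i ∈ S, closedBall (p i) (r i)).Nonempty}.ncard
      ≤ k * d * Nat.choose (9 * d) (d - 1) := by
  classical
  set B : Finset (Finset (Fin k)) :=
    univ.filter (fun S => S.Nonempty ∧ (⋂ i ∈ S, closedBall (p i) (r i)).Nonempty) with hB
  have hAB : {S : Finset (Fin k) | S.Nonempty ∧ (⋂ i ∈ S, closedBall (p i) (r i)).Nonempty}
      = ↑B := by
    ext S; simp [hB]
  rw [hAB, Set.ncard_coe_finset]
  -- every member of B has card ≤ d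
  have hcard : ∀ S ∈ B, S.card ≤ d := by
    intro S hS
    simp only [hB, mem_filter] at hS
    obtain ⟨x, hx⟩ := hS.2.2
    have hsub : (↑S : Set (Fin k)) ⊆ {i : Fin k | x ∈ closedBall (p i) (r i)} := by
      intro i hi
      exact Set.mem_iInter₂.mp hx i hi
    calc S.card = (↑S : Set (Fin k)).ncard := (Set.ncard_coe_finset S).symm
      _ ≤ _ := Set.ncard_le_ncard hsub (Set.toFinite _)
      _ ≤ d := hply x
  rcases Nat.eq_zero_or_pos d with hd | hd
  · have : B = ∅ := by
      rw [eq_empty_iff_forall_notMem]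
      intro S hS
      have h1 := hcard S hS
      simp only [hB, mem_filter] at hS
      have := hS.2.1.card_pos
      omega
    simp [this]
  -- neighbor finsets
  set N : Fin k → Finset (Fin k) := fun i => univ.filter (fun j =>
    f i < f j ∧ (closedBall (p i) (r i) ∩ closedBall (p j) (r j)).Nonempty) with hNdef
  have hN : ∀ i, (N i).card ≤ 9 * d := by
    intro i
    have heq : (↑(N i) : Set (Fin k)) =
        {j : Fin k | f i < f j ∧ (closedBall (p i) (r i) ∩ closedBall (p j) (r j)).Nonempty} := by
      ext j; simp [hNdef]
    calc (N i).card = (↑(N i) : Set (Fin k)).ncard := (Set.ncard_coe_finset _).symm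
      _ ≤ 9 * d := by rw [heq]; exact hind i
  -- cover B by fibers of the minimum
  have hcover : B ⊆ univ.biUnion (fun i =>
      B.filter (fun S => i ∈ S ∧ ∀ j ∈ S, f i ≤ f j)) := by
    intro S hS
    have hne : S.Nonempty := by
      simp only [hB, mem_filter] at hS; exact hS.2.1
    obtain ⟨i, hiS, hmin⟩ := S.exists_min_image f hne
    exact mem_biUnion.mpr ⟨i, mem_univ i, mem_filter.mpr ⟨hS, hiS, hmin⟩⟩
  -- fiber bound
  have hfiber : ∀ i : Fin k, (B.filter (fun S => i ∈ S ∧ ∀ j ∈ S, f i ≤ f j)).card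
      ≤ d * Nat.choose (9 * d) (d - 1) := by
    intro i
    set P : Finset (Finset (Fin k)) := (N i).powerset.filter (fun T => T.card ≤ d - 1) with hP
    have h1 : (B.filter (fun S => i ∈ S ∧ ∀ j ∈ S, f i ≤ f j)).card ≤ P.card := by
      apply card_le_card_of_injOn (fun S => S.erase i)
      · intro S hS
        simp only [mem_coe, mem_filter] at hS
        obtain ⟨hSB, hiS, hmin⟩ := hS
        have hBx : (⋂ j ∈ S, closedBall (p j) (r j)).Nonempty := by
          simp only [hB, mem_filter] at hSB; exact hSB.2.2
        obtain ⟨x, hx⟩ := hBx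
        simp only [hP, mem_coe, mem_filter, mem_powerset]
        refine ⟨?_, ?_⟩
        · intro j hj
          rw [mem_erase] at hj
          obtain ⟨hji, hjS⟩ := hj
          simp only [hNdef, mem_filter, mem_univ, true_and]
          refine ⟨lt_of_le_of_ne (hmin j hjS) (fun h => hji (hf h).symm), ?_⟩
          exact ⟨x, Set.mem_iInter₂.mp hx i hiS, Set.mem_iInter₂.mp hx j hjS⟩
        · have := hcard S hSB
          rw [card_erase_of_mem hiS]
          omega
      · intro S1 hS1 S2 hS2 heq
        simp only [coe_filter, Set.mem_setOf_eq] at hS1 hS2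
        simp only at heq
        rw [← insert_erase hS1.2.1, heq, insert_erase hS2.2.1]
    have h2 : P ⊆ (range d).biUnion (fun j => (N i).powersetCard j) := by
      intro T hT
      simp only [hP, mem_filter, mem_powerset] at hT
      refine mem_biUnion.mpr ⟨T.card, mem_range.mpr (by omega), ?_⟩
      exact mem_powersetCard.mpr ⟨hT.1, rfl⟩
    calc (B.filter (fun S => i ∈ S ∧ ∀ j ∈ S, f i ≤ f j)).card ≤ P.card := h1
      _ ≤ ((range d).biUnion (fun j => (N i).powersetCard j)).card := card_le_card h2
      _ ≤ ∑ j ∈ range d, ((N i).powersetCard j).card := card_biUnion_le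
      _ ≤ ∑ j ∈ range d, Nat.choose (9 * d) (d - 1) := by
          apply Finset.sum_le_sum
          intro j hj
          rw [card_powersetCard]
          calc ((N i).card).choose j ≤ (9 * d).choose j := Nat.choose_le_choose j (hN i)
            _ ≤ (9 * d).choose (d - 1) := by
                apply choose_mono_right (d - 1) (by omega)
                rw [mem_range] at hj; omega
      _ = d * Nat.choose (9 * d) (d - 1) := by rw [Finset.sum_const, card_range, smul_eq_mul]
  calc B.card ≤ (univ.biUnion (fun i => B.filter (fun S => i ∈ S ∧ ∀ j ∈ S, f i ≤ f j))).card :=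
        card_le_card hcover
    _ ≤ ∑ i : Fin k, (B.filter (fun S => i ∈ S ∧ ∀ j ∈ S, f i ≤ f j)).card := card_biUnion_le
    _ ≤ ∑ _i : Fin k, d * Nat.choose (9 * d) (d - 1) := Finset.sum_le_sum (fun i _ => hfiber i)
    _ = k * d * Nat.choose (9 * d) (d - 1) := by
        rw [Finset.sum_const, card_univ, Fintype.card_fin, smul_eq_mul, mul_assoc]
end

section
/- A graph obtained from a perfect graph H by replacing each vertex v of H with an independent set I_v (where each vertex of I_u is adjacent to each vertex of I_v whenever uv is an edge of H, and there are no edges within any I_v) is perfect. -/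
open SimpleGraph

/-- A graph is perfect if every induced subgraph has chromatic number equal to its
clique number. -/
def SimpleGraph.IsPerfect {V : Type*} (G : SimpleGraph V) : Prop :=
  ∀ s : Set V, (G.induce s).chromaticNumber = ((G.induce s).cliqueNum : ℕ∞)

/-- The blow-up of `H` replacing each vertex `v` by an independent set of `m v`
vertices, where all cross edges between the blobs of adjacent vertices are added. -/
def blowup {α : Type*} (H : SimpleGraph α) (m : α → ℕ) :
    SimpleGraph (Σ v : α, Fin (m v)) where
  Adj a b := H.Adj a.1 b.1
  symm := ⟨fun a b h => H.adj_symm h⟩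
  loopless := ⟨fun a => H.irrefl⟩

/-- Replacing each vertex of a perfect graph by an independent set yields a perfect
graph. -/
theorem blowup_isPerfect {α : Type*} [Fintype α] (H : SimpleGraph α) (m : α → ℕ)
    (hH : H.IsPerfect) : (blowup H m).IsPerfect := by
  classical
  intro s
  set supp : Set α := {v | ∃ i : Fin (m v), (⟨v, i⟩ : Σ v : α, Fin (m v)) ∈ s} with hsupp
  haveI : Fintype ↥s := Fintype.ofFinite _
  haveI : Fintype ↥supp := Fintype.ofFinite _
  -- the projection map
  have hmem : ∀ x : ↥s, x.1.1 ∈ supp := fun x => ⟨x.1.2, by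
    have := x.2; simpa using this⟩
  let f : ↥s → ↥supp := fun x => ⟨x.1.1, hmem x⟩
  -- a section of the projection
  let g : ↥supp → ↥s := fun v => ⟨⟨v.1, Classical.choose v.2⟩, Classical.choose_spec v.2⟩
  have hg1 : ∀ v : ↥supp, (g v).1.1 = v.1 := fun v => rfl
  -- clique number equality
  have hω : ((blowup H m).induce s).cliqueNum = (H.induce supp).cliqueNum := by
    apply le_antisymm
    · obtain ⟨t, ht⟩ := ((blowup H m).induce s).exists_isNClique_cliqueNum
      have hinj : Set.InjOn f ↑t := by
        intro x hx y hy hxy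
        by_contra hne
        have hadj := ht.isClique hx hy hne
        have h2 : H.Adj x.1.1 y.1.1 := hadj
        have heq : x.1.1 = y.1.1 := congrArg Subtype.val hxy
        rw [heq] at h2
        exact H.irrefl h2
      have himg : (H.induce supp).IsClique ↑(t.image f) := by
        intro a ha b hb hab
        simp only [Finset.coe_image, Set.mem_image] at ha hb
        obtain ⟨x, hx, rfl⟩ := ha
        obtain ⟨y, hy, rfl⟩ := hb
        have hne : x ≠ y := fun h => hab (by rw [h])
        exact ht.isClique hx hy hne
      have hcard : (t.image f).card = t.card := Finset.card_image_of_injOn hinj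
      calc ((blowup H m).induce s).cliqueNum = t.card := ht.card_eq.symm
        _ = (t.image f).card := hcard.symm
        _ ≤ (H.induce supp).cliqueNum := himg.card_le_cliqueNum
    · obtain ⟨t, ht⟩ := (H.induce supp).exists_isNClique_cliqueNum
      have hinj : Function.Injective g := by
        intro v w hvw
        exact Subtype.ext (congrArg Sigma.fst (congrArg Subtype.val hvw))
      have himg : ((blowup H m).induce s).IsClique ↑(t.image g) := by
        intro a ha b hb hab
        simp only [Finset.coe_image, Set.mem_image] at ha hb
        obtain ⟨x, hx, rfl⟩ := ha
        obtain ⟨y, hy, rfl⟩ := hb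
        have hne : x ≠ y := fun h => hab (by rw [h])
        have hadj := ht.isClique hx hy hne
        exact hadj
      have hcard : (t.image g).card = t.card := Finset.card_image_of_injective _ hinj
      calc (H.induce supp).cliqueNum = t.card := ht.card_eq.symm
        _ = (t.image g).card := hcard.symm
        _ ≤ ((blowup H m).induce s).cliqueNum := himg.card_le_cliqueNum
  -- chromatic number inequality
  have hχ : ((blowup H m).induce s).chromaticNumber ≤ (H.induce supp).chromaticNumber := by
    apply chromaticNumber_le_of_forall_imp
    intro n ⟨C⟩
    exact ⟨⟨fun x => C (f x), by
      intro x y hadj hc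
      have hadj' : H.Adj x.1.1 y.1.1 := hadj
      exact C.valid (show (H.induce supp).Adj (f x) (f y) from hadj') hc⟩⟩
  -- clique number ≤ chromatic number
  have hωχ : (((blowup H m).induce s).cliqueNum : ℕ∞) ≤
      ((blowup H m).induce s).chromaticNumber := by
    obtain ⟨t, ht⟩ := ((blowup H m).induce s).exists_isNClique_cliqueNum
    calc ((((blowup H m).induce s).cliqueNum : ℕ) : ℕ∞) = (t.card : ℕ∞) := by
          rw [ht.card_eq]
      _ ≤ _ := ht.isClique.card_le_chromaticNumber
  refine le_antisymm ?_ hωχ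
  calc ((blowup H m).induce s).chromaticNumber ≤ (H.induce supp).chromaticNumber := hχ
    _ = ((H.induce supp).cliqueNum : ℕ∞) := hH supp
    _ = (((blowup H m).induce s).cliqueNum : ℕ∞) := by rw [hω]
end

section
/- Every integer vector c in the lattice kernel of an integer matrix A (i.e., Ac = 0, c ≠ 0) can be written as a finite conformal sum c = Σ gᵢ of Graver basis elements gᵢ of A, where each gᵢ lies in the same orthant as c (i.e., gᵢ ⊑ c componentwise in sign and absolute value). -/
/-- ConformalLE (sign-compatible) partial order on integer vectors: `u ⊑ v` iff `u` lies
in the same orthant as `v` and is componentwise dominated in absolute value. -/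
def ConformalLE {n : ℕ} (u v : Fin n → ℤ) : Prop :=
  ∀ i, 0 ≤ u i * v i ∧ |u i| ≤ |v i|

/-- The Graver basis of an integer matrix `A`: the `⊑`-minimal nonzero integer vectors
in the kernel of `A`. -/
def GraverBasis {m n : ℕ} (A : Matrix (Fin m) (Fin n) ℤ) : Set (Fin n → ℤ) :=
  {g | A.mulVec g = 0 ∧ g ≠ 0 ∧
    ∀ h : Fin n → ℤ, A.mulVec h = 0 → h ≠ 0 → ConformalLE h g → h = g}

private lemma comp_strict (a b : ℤ) (h1 : 0 ≤ a * b) (h2 : a.natAbs ≤ b.natAbs)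
    (h3 : a ≠ b) : a.natAbs < b.natAbs := by
  rcases lt_trichotomy b 0 with hb | hb | hb
  · have ha : a ≤ 0 := by nlinarith
    omega
  · omega
  · have ha : 0 ≤ a := by nlinarith
    omega

private lemma comp_sub (a b : ℤ) (h1 : 0 ≤ b * a) (h2 : b.natAbs ≤ a.natAbs) :
    (a - b).natAbs + b.natAbs = a.natAbs := by
  rcases lt_trichotomy a 0 with ha | ha | ha
  · have hb : b ≤ 0 := by nlinarith
    omega
  · omega
  · have hb : 0 ≤ b := by nlinarith
    omega

private lemma comp_signs (a b : ℤ) (h1 : 0 ≤ b * a) (h2 : b.natAbs ≤ a.natAbs) :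
    (0 ≤ a ∧ 0 ≤ b) ∨ (a ≤ 0 ∧ b ≤ 0) := by
  rcases lt_trichotomy a 0 with ha | ha | ha
  · have hb : b ≤ 0 := by nlinarith
    exact Or.inr ⟨le_of_lt ha, hb⟩
  · right; constructor <;> omega
  · have hb : 0 ≤ b := by nlinarith
    exact Or.inl ⟨le_of_lt ha, hb⟩

private lemma conformal_sub {n : ℕ} {h c : Fin n → ℤ} (hhc : ConformalLE h c) :
    ConformalLE (fun i => c i - h i) c := by
  intro i
  obtain ⟨h1, h2⟩ := hhc i
  dsimp only
  rw [Int.abs_eq_natAbs, Int.abs_eq_natAbs] at h2 ⊢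
  have h2' : (h i).natAbs ≤ (c i).natAbs := by exact_mod_cast h2
  rcases comp_signs (c i) (h i) h1 h2' with ⟨ha, hb⟩ | ⟨ha, hb⟩
  · have hd : h i ≤ c i := by omega
    exact ⟨by nlinarith, by omega⟩
  · have hd : c i ≤ h i := by omega
    exact ⟨by nlinarith, by omega⟩

private lemma conformal_trans {n : ℕ} {g h c : Fin n → ℤ} (h1 : ConformalLE g h)
    (h2 : ConformalLE h c) : ConformalLE g c := by
  intro i
  obtain ⟨p1, q1⟩ := h1 i
  obtain ⟨p2, q2⟩ := h2 i
  refine ⟨?_, le_trans q1 q2⟩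
  rcases lt_trichotomy (h i) 0 with hb | hb | hb
  · have hg : g i ≤ 0 := by nlinarith
    have hcle : c i ≤ 0 := by nlinarith
    nlinarith
  · have : g i = 0 := by
      have := q1; rw [hb] at this; simpa [abs_nonpos_iff] using this
    simp [this]
  · have hg : 0 ≤ g i := by nlinarith
    have hcge : 0 ≤ c i := by nlinarith
    positivity

private lemma kernel_decomp {m n : ℕ} (A : Matrix (Fin m) (Fin n) ℤ) :
    ∀ N : ℕ, ∀ c : Fin n → ℤ, (∑ i, (c i).natAbs) = N → A.mulVec c = 0 → c ≠ 0 →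
    ∃ (k : ℕ) (g : Fin k → (Fin n → ℤ)),
      (∀ i, g i ∈ GraverBasis A) ∧ (∀ i, ConformalLE (g i) c) ∧ c = ∑ i, g i := by
  intro N
  induction N using Nat.strong_induction_on with
  | _ N IH =>
    intro c hN hc hc0
    by_cases hG : c ∈ GraverBasis A
    · refine ⟨1, fun _ => c, fun _ => hG, fun _ i => ⟨mul_self_nonneg _, le_refl _⟩, ?_⟩
      simp
    · have : ∃ h : Fin n → ℤ, A.mulVec h = 0 ∧ h ≠ 0 ∧ ConformalLE h c ∧ h ≠ c := by
        by_contra hcon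
        push_neg at hcon
        exact hG ⟨hc, hc0, fun h hh hh0 hle => hcon h hh hh0 hle⟩
      obtain ⟨h, hker, hh0, hle, hne⟩ := this
      -- componentwise absolute value facts
      have hcomp : ∀ i, (h i).natAbs ≤ (c i).natAbs := by
        intro i
        obtain ⟨_, q⟩ := hle i
        rw [Int.abs_eq_natAbs, Int.abs_eq_natAbs] at q
        exact_mod_cast q
      have hN1 : (∑ i, (h i).natAbs) < N := by
        have hex : ∃ i, h i ≠ c i := by
          by_contra hk; push_neg at hk; exact hne (funext hk)
        obtain ⟨i, hi⟩ := hex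
        have hlt : (h i).natAbs < (c i).natAbs :=
          comp_strict _ _ (hle i).1 (hcomp i) hi
        calc (∑ j, (h j).natAbs) < ∑ j, (c j).natAbs := by
              apply Finset.sum_lt_sum (fun j _ => hcomp j) ⟨i, Finset.mem_univ i, hlt⟩
          _ = N := hN
      have hsub : ∀ i, ((c - h) i).natAbs + (h i).natAbs = (c i).natAbs := by
        intro i
        exact comp_sub (c i) (h i) (hle i).1 (hcomp i)
      have hN2 : (∑ i, ((c - h) i).natAbs) < N := by
        have hpos : 0 < ∑ i, (h i).natAbs := by
          rcases Function.ne_iff.mp hh0 with ⟨i, hi⟩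
          have : 0 < (h i).natAbs := by simpa [Int.natAbs_pos] using hi
          exact Finset.sum_pos' (fun _ _ => Nat.zero_le _) ⟨i, Finset.mem_univ i, this⟩
        have hsum : (∑ i, ((c - h) i).natAbs) + (∑ i, (h i).natAbs) = ∑ i, (c i).natAbs := by
          rw [← Finset.sum_add_distrib]
          exact Finset.sum_congr rfl fun i _ => hsub i
        omega
      have hker2 : A.mulVec (c - h) = 0 := by
        rw [Matrix.mulVec_sub, hc, hker, sub_zero]
      have hne2 : c - h ≠ 0 := sub_ne_zero.mpr (Ne.symm hne)
      have hle2 : ConformalLE (c - h) c := by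
        have := conformal_sub hle
        convert this using 1
        exact funext fun _ => rfl
      obtain ⟨k₁, g₁, hg₁, hcl₁, hsum₁⟩ := IH _ hN1 h rfl hker hh0
      obtain ⟨k₂, g₂, hg₂, hcl₂, hsum₂⟩ := IH _ hN2 (c - h) rfl hker2 hne2
      refine ⟨k₁ + k₂, Fin.append g₁ g₂, ?_, ?_, ?_⟩
      · intro i
        refine Fin.addCases (fun j => ?_) (fun j => ?_) i
        · rw [Fin.append_left]; exact hg₁ j
        · rw [Fin.append_right]; exact hg₂ j
      · intro i
        refine Fin.addCases (fun j => ?_) (fun j => ?_) i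
        · rw [Fin.append_left]; exact conformal_trans (hcl₁ j) hle
        · rw [Fin.append_right]; exact conformal_trans (hcl₂ j) hle2
      · rw [Fin.sum_univ_add]
        simp only [Fin.append_left, Fin.append_right]
        rw [← hsum₁, ← hsum₂]
        abel

/-- Every nonzero integer vector in the kernel of `A` is a finite conformal sum of
Graver basis elements of `A`. -/
theorem kernel_eq_conformal_sum_graver {m n : ℕ} (A : Matrix (Fin m) (Fin n) ℤ)
    (c : Fin n → ℤ) (hc : A.mulVec c = 0) (hc0 : c ≠ 0) :
    ∃ (k : ℕ) (g : Fin k → (Fin n → ℤ)),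
      (∀ i, g i ∈ GraverBasis A) ∧ (∀ i, ConformalLE (g i) c) ∧ c = ∑ i, g i := by
  exact kernel_decomp A _ c rfl hc hc0
end
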